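/- Let π be a permutation of a finite set X and (x₁*, y₁*), ..., (x_k*, y_k*) be a k-tuple of pairs that is good with respect to π. Then the iterated reprogramming satisfies: π[x₁* → y₁*]...[x_k* → y_k*](z) = y_j* if z = x_j* for some j, π[x₁* → y₁*]...[x_k* → y_k*](z) = π(x_j*) if z = π⁻¹(y_j*) for some j, and π[x₁* → y₁*]...[x_k* → y_k*](z) = π(z) otherwise. -/
import Mathlib


open Equiv Finset
open scoped Classical

variable {X : Type*} [DecidableEq X] [Fintype X]

/-- Pointwise definition of the reprogrammed function `π[x → y]`. -/
def reprogFun (π : Equiv.Perm X) (x y : X) (z : X) : X :=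
  if z = x then y else if z = π.symm y then π x else π z

/-- Reprogramming of a permutation: `π[x → y] = π ∘ (x  π⁻¹(y))`. -/
def reprog (π : Equiv.Perm X) (x y : X) : Equiv.Perm X :=
  π * Equiv.swap x (π.symm y)

/-- Iterated reprogramming over a list of pairs, applied left to right. -/
def reprogList (π : Equiv.Perm X) (ps : List (X × X)) : Equiv.Perm X :=
  ps.foldl (fun σ p => reprog σ p.1 p.2) π

/-- Iterated reprogramming `π[x₁ → y₁]...[x_k → y_k]` over vectors of pairs. -/
def reprogVec {k : ℕ} (π : Equiv.Perm X) (x y : Fin k → X) : Equiv.Perm X :=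
  (List.finRange k).foldl (fun σ i => reprog σ (x i) (y i)) π

/-- A tuple of pairs `(x i, y i)` is good w.r.t. `π`. -/
def IsGood {k : ℕ} (π : Equiv.Perm X) (x y : Fin k → X) : Prop :=
  Function.Injective x ∧ Function.Injective y ∧ ∀ i j, π (x i) ≠ y j

lemma reprog_apply (π : Equiv.Perm X) (a b z : X) :
    reprog π a b z = if z = a then b else if z = π.symm b then π a else π z := by
  simp only [reprog, Equiv.Perm.mul_apply, Equiv.swap_apply_def]
  split_ifs <;> simp_all

/-- Goodness for lists of pairs. -/
def GoodL (π : Equiv.Perm X) (ps : List (X × X)) : Prop :=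
  ps.Pairwise (fun p q => p.1 ≠ q.1 ∧ p.2 ≠ q.2) ∧
  ∀ p ∈ ps, ∀ q ∈ ps, π p.1 ≠ q.2

lemma reprogList_good (π : Equiv.Perm X) (ps : List (X × X)) (h : GoodL π ps) :
    (∀ p ∈ ps, reprogList π ps p.1 = p.2) ∧
    (∀ p ∈ ps, reprogList π ps (π.symm p.2) = π p.1) ∧
    (∀ z, (∀ p ∈ ps, z ≠ p.1 ∧ z ≠ π.symm p.2) → reprogList π ps z = π z) := by
  induction ps generalizing π with
  | nil => simp [reprogList]
  | cons a ps ih =>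
    obtain ⟨hpw, hxy⟩ := h
    rw [List.pairwise_cons] at hpw
    obtain ⟨ha, hpw⟩ := hpw
    set π' := reprog π a.1 a.2 with hπ'
    have haa : π a.1 ≠ a.2 := hxy a (.head _) a (.head _)
    have key : ∀ p ∈ ps, π' p.1 = π p.1 := by
      intro p hp
      rw [hπ', reprog_apply]
      have h1 : p.1 ≠ a.1 := fun e => (ha p hp).1 e.symm
      have h2 : p.1 ≠ π.symm a.2 := by
        intro e
        exact hxy p (.tail _ hp) a (.head _) (by rw [e]; simp)
      simp [h1, h2]
    have hgood : GoodL π' ps := by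
      refine ⟨hpw, fun p hp q hq => ?_⟩
      rw [key p hp]
      exact hxy p (.tail _ hp) q (.tail _ hq)
    obtain ⟨IH1, IH2, IH3⟩ := ih π' hgood
    have hfold : ∀ z, reprogList π (a :: ps) z = reprogList π' ps z := fun z => rfl
    have ksymm : ∀ p ∈ ps, π'.symm p.2 = π.symm p.2 := by
      intro p hp
      have hv : π' (π.symm p.2) = p.2 := by
        rw [hπ', reprog_apply]
        have h1 : π.symm p.2 ≠ a.1 := by
          intro e
          exact hxy a (.head _) p (.tail _ hp) (by rw [← e]; simp)
        have h2 : π.symm p.2 ≠ π.symm a.2 := by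
          simp only [ne_eq, EmbeddingLike.apply_eq_iff_eq]
          exact fun e => (ha p hp).2 e.symm
        simp [h1, h2]
      exact (Equiv.symm_apply_eq π').mpr hv.symm
    refine ⟨?_, ?_, ?_⟩
    · intro p hp
      rcases List.mem_cons.mp hp with rfl | hp
      · rw [hfold]
        have := IH3 p.1 (by
          intro q hq
          refine ⟨fun e => (ha q hq).1 e, ?_⟩
          rw [ksymm q hq]
          intro e
          exact hxy p (.head _) q (.tail _ hq) (by rw [e]; simp))
        rw [this, hπ', reprog_apply]
        simp
      · rw [hfold]; exact IH1 p hp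
    · intro p hp
      rcases List.mem_cons.mp hp with rfl | hp
      · rw [hfold]
        have := IH3 (π.symm p.2) (by
          intro q hq
          constructor
          · intro e
            exact hxy q (.tail _ hq) p (.head _) (by rw [← e]; simp)
          · rw [ksymm q hq]
            simp only [ne_eq, EmbeddingLike.apply_eq_iff_eq]
            exact fun e => (ha q hq).2 e)
        rw [this, hπ', reprog_apply]
        have h1 : π.symm p.2 ≠ p.1 := by
          intro e
          exact haa (by rw [← e]; simp)
        simp [h1]
      · rw [hfold, ← ksymm p hp, IH2 p hp, key p hp]
    · intro z hz
      rw [hfold]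
      have hza := hz a (.head _)
      have := IH3 z (by
        intro q hq
        refine ⟨(hz q (.tail _ hq)).1, ?_⟩
        rw [ksymm q hq]
        exact (hz q (.tail _ hq)).2)
      rw [this, hπ', reprog_apply]
      simp [hza.1, hza.2]

/-- Reprogramming on good tuples: full description of
`π[x₁* → y₁*]...[x_k* → y_k*]`. -/
theorem reprogVec_good {k : ℕ} (π : Equiv.Perm X) (x y : Fin k → X)
    (h : IsGood π x y) :
    (∀ j, reprogVec π x y (x j) = y j) ∧
    (∀ j, reprogVec π x y (π.symm (y j)) = π (x j)) ∧
    (∀ z, (∀ j, z ≠ x j ∧ z ≠ π.symm (y j)) → reprogVec π x y z = π z) := by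
  obtain ⟨hx, hy, hxy⟩ := h
  set ps : List (X × X) := (List.finRange k).map (fun i => (x i, y i)) with hps
  have hrv : reprogVec π x y = reprogList π ps := by
    rw [reprogVec, reprogList, hps, List.foldl_map]
  have hgood : GoodL π ps := by
    constructor
    · rw [hps, List.pairwise_map]
      exact (List.nodup_finRange k).imp (fun {i j} hij =>
        ⟨fun e => hij (hx e), fun e => hij (hy e)⟩)
    · rintro p hp q hq
      rw [hps] at hp hq
      obtain ⟨i, -, rfl⟩ := List.mem_map.mp hp
      obtain ⟨j, -, rfl⟩ := List.mem_map.mp hq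
      exact hxy i j
  obtain ⟨H1, H2, H3⟩ := reprogList_good π ps hgood
  have hmem : ∀ j, (x j, y j) ∈ ps :=
    fun j => List.mem_map.mpr ⟨j, List.mem_finRange j, rfl⟩
  refine ⟨fun j => ?_, fun j => ?_, fun z hz => ?_⟩
  · rw [hrv]; exact H1 (x j, y j) (hmem j)
  · rw [hrv]; exact H2 (x j, y j) (hmem j)
  · rw [hrv]
    apply H3
    intro p hp
    obtain ⟨i, -, rfl⟩ := List.mem_map.mp hp
    exact hz i
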